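/- The variety of commutative monoids does not have the amalgamation property: there exist commutative monoids A, B, C with A a common submonoid of B and C such that no monoid D admits embeddings of B and C agreeing on A. Concretely, let A = {u, v, w, 0, e} with identity e and all products of non-identity elements equal to 0 except as forced; B = A ∪ {b} with bu = v; C = A ∪ {c} with cv = w; and all other products 0. Any amalgam would force w = 0, a contradiction. -/

import Mathlib

inductive AA : Type | e | u | v | w | z
  deriving DecidableEq

instance : Fintype AA := ⟨{AA.e, AA.u, AA.v, AA.w, AA.z}, fun x => by cases x <;> simp⟩

inductive BB : Type | e | u | v | w | z | b
  deriving DecidableEq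

instance : Fintype BB := ⟨{BB.e, BB.u, BB.v, BB.w, BB.z, BB.b}, fun x => by cases x <;> simp⟩

inductive CC : Type | e | u | v | w | z | c
  deriving DecidableEq

instance : Fintype CC := ⟨{CC.e, CC.u, CC.v, CC.w, CC.z, CC.c}, fun x => by cases x <;> simp⟩

def AA.mul : AA → AA → AA
  | .e, x => x
  | x, .e => x
  | _, _ => .z

def BB.mul : BB → BB → BB
  | .e, x => x
  | x, .e => x
  | .b, .u => .v
  | .u, .b => .v
  | _, _ => .z

def CC.mul : CC → CC → CC
  | .e, x => x
  | x, .e => x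
  | .c, .v => .w
  | .v, .c => .w
  | _, _ => .z

instance : CommMonoid AA where
  mul := AA.mul
  one := AA.e
  mul_assoc := by decide
  one_mul := by decide
  mul_one := by decide
  mul_comm := by decide

instance : CommMonoid BB where
  mul := BB.mul
  one := BB.e
  mul_assoc := by decide
  one_mul := by decide
  mul_one := by decide
  mul_comm := by decide

instance : CommMonoid CC where
  mul := CC.mul
  one := CC.e
  mul_assoc := by decide
  one_mul := by decide
  mul_one := by decide
  mul_comm := by decide

def fAB : AA → BB
  | .e => .e | .u => .u | .v => .v | .w => .w | .z => .z

def fAC : AA → CC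
  | .e => .e | .u => .u | .v => .v | .w => .w | .z => .z

def φB' : AA →* BB where
  toFun := fAB
  map_one' := rfl
  map_mul' := by decide

def φC' : AA →* CC where
  toFun := fAC
  map_one' := rfl
  map_mul' := by decide

/-- The variety of commutative monoids does not have the amalgamation property: there are
commutative monoids `A`, `B`, `C` and monoid embeddings `φ_B : A → B`, `φ_C : A → C`
such that no monoid `D` admits embeddings `ψ_B : B → D`, `ψ_C : C → D` with
`ψ_B ∘ φ_B = ψ_C ∘ φ_C`. -/
theorem injB : Function.Injective φB' := by
  intro x y h
  cases x <;> cases y <;> simp_all [φB', fAB] <;> exact absurd h (by decide)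

theorem injC : Function.Injective φC' := by
  intro x y h
  cases x <;> cases y <;> simp_all [φC', fAC] <;> exact absurd h (by decide)

theorem commutative_monoids_fail_AP :
    ∃ (A B C : CommMonCat) (φB : ↥A →* ↥B) (φC : ↥A →* ↥C),
      Function.Injective φB ∧ Function.Injective φC ∧
      ¬ ∃ (D : MonCat) (ψB : ↥B →* ↥D) (ψC : ↥C →* ↥D),
          Function.Injective ψB ∧ Function.Injective ψC ∧
          ∀ a : ↥A, ψB (φB a) = ψC (φC a) := by
  refine ⟨CommMonCat.of (ULift AA), CommMonCat.of (ULift BB), CommMonCat.of (ULift CC),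
    (MulEquiv.ulift.symm.toMonoidHom.comp φB').comp MulEquiv.ulift.toMonoidHom,
    (MulEquiv.ulift.symm.toMonoidHom.comp φC').comp MulEquiv.ulift.toMonoidHom,
    ?_, ?_, ?_⟩
  · exact MulEquiv.ulift.symm.injective.comp (injB.comp MulEquiv.ulift.injective)
  · exact MulEquiv.ulift.symm.injective.comp (injC.comp MulEquiv.ulift.injective)
  · rintro ⟨D, ψB, ψC, hB, hC, hcomm⟩
    have hv : ψB ⟨BB.v⟩ = ψC ⟨CC.v⟩ := hcomm ⟨AA.v⟩
    have hu : ψB ⟨BB.u⟩ = ψC ⟨CC.u⟩ := hcomm ⟨AA.u⟩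
    have hz : ψB ⟨BB.z⟩ = ψC ⟨CC.z⟩ := hcomm ⟨AA.z⟩
    have mC : ∀ x y : CC, (⟨x⟩ * ⟨y⟩ : ULift CC) = ⟨x.mul y⟩ := fun _ _ => rfl
    have mB : ∀ x y : BB, (⟨x⟩ * ⟨y⟩ : ULift BB) = ⟨x.mul y⟩ := fun _ _ => rfl
    have key : ψC ⟨CC.w⟩ = ψC ⟨CC.z⟩ := by
      calc ψC ⟨CC.w⟩ = ψC (⟨CC.v⟩ * ⟨CC.c⟩) := by rw [mC]; rfl
        _ = ψC ⟨CC.v⟩ * ψC ⟨CC.c⟩ := map_mul _ _ _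
        _ = ψB (⟨BB.b⟩ * ⟨BB.u⟩) * ψC ⟨CC.c⟩ := by rw [← hv, mB]; rfl
        _ = ψB ⟨BB.b⟩ * (ψC ⟨CC.u⟩ * ψC ⟨CC.c⟩) := by rw [map_mul, hu, mul_assoc]
        _ = ψB ⟨BB.b⟩ * ψC (⟨CC.u⟩ * ⟨CC.c⟩) := by rw [map_mul]
        _ = ψB ⟨BB.b⟩ * ψB ⟨BB.z⟩ := by rw [mC]; exact congrArg _ hz.symm
        _ = ψB (⟨BB.b⟩ * ⟨BB.z⟩) := (map_mul _ _ _).symm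
        _ = ψC ⟨CC.z⟩ := by rw [mB]; exact hz
    have : CC.w = CC.z := congrArg ULift.down (hC key)
    exact absurd this (by decide)
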